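/- arXiv:2404.07639 — 2 statements merged into one kernel-verified Lean document; each statement's English description precedes it below -/
import Mathlib

section
/- Let R be a commutative Noetherian integral domain, n a positive integer, and M a finitely generated R[n]-module. Let t_M : M → M^{∨∨} be the canonical evaluation map into the double dual. Then the cokernel of t_M is a torsion R[n]-module: every element of coker(t_M) is annihilated by some non-zero-divisor of R[n]. -/
open Polynomial

noncomputable section

/-- The primitive multiple ring `R[n] = R[t]/(t^n)`. -/
abbrev Rn (R : Type*) [CommRing R] (n : ℕ) : Type _ :=
  Polynomial R ⧸ Ideal.span {(X : Polynomial R) ^ n}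

/-- The class `t` of the variable in `R[n]`. -/
def tn (R : Type*) [CommRing R] (n : ℕ) : Rn R n :=
  Ideal.Quotient.mk _ X

/-- `R[k] = R[n]/(t^k)` as an `R[n]`-module (for `k ≤ n` this is `R[t]/(t^k)`
with the `R[n]`-module structure coming from the natural surjection `R[n] → R[k]`). -/
abbrev Rmod (R : Type*) [CommRing R] (n k : ℕ) : Type _ :=
  Rn R n ⧸ (Ideal.span {tn R n ^ k})

/-- The constant term homomorphism `R[n] → R` (for `n > 0`). -/
def ct (R : Type*) [CommRing R] (n : ℕ) (hn : 0 < n) : Rn R n →+* R :=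
  Ideal.Quotient.lift _ (evalRingHom 0) (by
    intro a ha
    rw [Ideal.mem_span_singleton] at ha
    obtain ⟨c, rfl⟩ := ha
    simp [zero_pow hn.ne'])

section Modules

variable (R : Type*) [CommRing R] (n : ℕ) (M : Type*) [AddCommGroup M] [Module (Rn R n) M]

/-- The submodule `M_i = t^i M` of an `R[n]`-module `M`. -/
def tMi (i : ℕ) : Submodule (Rn R n) M :=
  LinearMap.range (LinearMap.lsmul (Rn R n) M (tn R n ^ i))

/-- The submodule `M^{(i)} = {m ∈ M : t^i m = 0}` of an `R[n]`-module `M`. -/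
def kt (i : ℕ) : Submodule (Rn R n) M :=
  LinearMap.ker (LinearMap.lsmul (Rn R n) M (tn R n ^ i))

/-- `G_i(M) = t^i M / t^{i+1} M`. -/
abbrev Gi (i : ℕ) :=
  (tMi R n M i) ⧸ (Submodule.comap (tMi R n M i).subtype (tMi R n M (i + 1)))

/-- `G^{(i+1)}(M) = M^{(i+1)}/M^{(i)}` (note the shift by one in the indexing:
`Gup R n M i` is `G^{(i+1)}(M)`). -/
abbrev Gup (i : ℕ) :=
  (kt R n M (i + 1)) ⧸ (Submodule.comap (kt R n M (i + 1)).subtype (kt R n M i))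

lemma tMi_succ_mem {i : ℕ} {x : M} (hx : x ∈ tMi R n M i) :
    tn R n • x ∈ tMi R n M (i + 1) := by
  obtain ⟨m, rfl⟩ := hx
  exact ⟨m, by simp [LinearMap.lsmul_apply, smul_smul, pow_succ']⟩

lemma kt_pred_mem {i : ℕ} {x : M} (hx : x ∈ kt R n M (i + 1)) :
    tn R n • x ∈ kt R n M i := by
  simp only [kt, LinearMap.mem_ker, LinearMap.lsmul_apply] at hx ⊢
  rw [smul_smul, ← pow_succ]
  exact hx

/-- `μ_i : G_i(M) → G_{i+1}(M)`, induced by multiplication by `t`. -/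
def muMap (i : ℕ) : Gi R n M i →ₗ[Rn R n] Gi R n M (i + 1) :=
  Submodule.mapQ _ _
    (LinearMap.restrict (LinearMap.lsmul (Rn R n) M (tn R n))
      (fun _ hx => tMi_succ_mem R n M hx))
    (fun x hx => by
      simp only [Submodule.mem_comap] at hx ⊢
      exact tMi_succ_mem R n M hx)

/-- `λ_{i+1} : G^{(i+2)}(M) → G^{(i+1)}(M)`, induced by multiplication by `t`
(with the shifted indexing, `lamMap R n M i : Gup (i+1) → Gup i`). -/
def lamMap (i : ℕ) : Gup R n M (i + 1) →ₗ[Rn R n] Gup R n M i :=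
  Submodule.mapQ _ _
    (LinearMap.restrict (LinearMap.lsmul (Rn R n) M (tn R n))
      (fun _ hx => kt_pred_mem R n M hx))
    (fun x hx => by
      simp only [Submodule.mem_comap] at hx ⊢
      exact kt_pred_mem R n M hx)

/-- The composition `μ_{k-1} ∘ ... ∘ μ_0 : G_0(M) → G_k(M)`. -/
def muComp : (k : ℕ) → (Gi R n M 0 →ₗ[Rn R n] Gi R n M k)
  | 0 => LinearMap.id
  | (k + 1) => (muMap R n M k).comp (muComp k)

/-- The composition `λ_1 ∘ ... ∘ λ_k : G^{(k+1)}(M) → G^{(1)}(M)`. -/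
def lamComp : (k : ℕ) → (Gup R n M k →ₗ[Rn R n] Gup R n M 0)
  | 0 => LinearMap.id
  | (k + 1) => (lamComp k).comp (lamMap R n M k)

end Modules


section AuxFrobenius

variable {R : Type*} [CommRing R] {n : ℕ}


lemma Rn.mk_eq_zero_iff (p : Polynomial R) :
    Ideal.Quotient.mk (Ideal.span {(X : Polynomial R) ^ n}) p = 0 ↔ (X : Polynomial R)^n ∣ p := by
  rw [Ideal.Quotient.eq_zero_iff_mem, Ideal.mem_span_singleton]

lemma tn_pow_mk (k : ℕ) (p : Polynomial R) :
    (tn R n)^k * Ideal.Quotient.mk _ p = Ideal.Quotient.mk _ ((X : Polynomial R)^k * p) := by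
  simp [tn, map_pow, map_mul]

lemma tn_pow_self : (tn R n)^n = 0 := by
  have : (tn R n)^n = Ideal.Quotient.mk _ ((X : Polynomial R)^n) := by simp [tn, map_pow]
  rw [this, Rn.mk_eq_zero_iff]

lemma algebraMap_Rn_eq (r : R) :
    algebraMap R (Rn R n) r = Ideal.Quotient.mk _ (C r) := rfl

lemma algebraMap_Rn_mem_nonZeroDivisors [IsDomain R] {r : R} (hr : r ≠ 0) :
    algebraMap R (Rn R n) r ∈ nonZeroDivisors (Rn R n) := by
  rw [mem_nonZeroDivisors_iff_right]
  intro a ha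
  obtain ⟨p, rfl⟩ := Ideal.Quotient.mk_surjective a
  rw [algebraMap_Rn_eq, ← map_mul, Rn.mk_eq_zero_iff, Polynomial.X_pow_dvd_iff] at ha
  rw [Rn.mk_eq_zero_iff, Polynomial.X_pow_dvd_iff]
  intro d hd
  have := ha d hd
  rw [coeff_mul_C] at this
  exact (mul_eq_zero.mp this).resolve_right hr

def lam (R : Type*) [CommRing R] (n : ℕ) : Rn R n →ₗ[R] R :=
  (lcoeff R (n-1)) ∘ₗ (AdjoinRoot.modByMonicHom (monic_X_pow n (R := R)))

lemma lam_mk (hn : 0 < n) (p : Polynomial R) :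
    lam R n (Ideal.Quotient.mk _ p) = p.coeff (n-1) := by
  have h1 : lam R n (Ideal.Quotient.mk _ p) = (p %ₘ X^n).coeff (n-1) := by
    simp [lam, AdjoinRoot.modByMonicHom_mk (monic_X_pow n) p]; rfl
  rw [h1, Polynomial.modByMonic_eq_sub_mul_div _ _, coeff_sub]
  have : ((X : Polynomial R)^n * (p /ₘ X^n)).coeff (n-1) = 0 := by
    rw [mul_comm, coeff_mul_X_pow']
    simp [Nat.not_le.mpr (Nat.sub_lt hn one_pos)]
  rw [this, sub_zero]

lemma lam_tn_pow (hn : 0 < n) (k : ℕ) (hk : k < n) :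
    lam R n ((tn R n)^k) = if k = n - 1 then 1 else 0 := by
  have : (tn R n)^k = Ideal.Quotient.mk _ ((X : Polynomial R)^k) := by simp [tn, map_pow]
  rw [this, lam_mk hn, coeff_X_pow]
  simp [eq_comm]

lemma eq_zero_of_lam (hn : 0 < n) (x : Rn R n)
    (h : ∀ k, lam R n ((tn R n)^k * x) = 0) : x = 0 := by
  obtain ⟨p, rfl⟩ := Ideal.Quotient.mk_surjective x
  rw [Rn.mk_eq_zero_iff, Polynomial.X_pow_dvd_iff]
  intro d hd
  have := h (n - 1 - d)
  rw [tn_pow_mk, lam_mk hn] at this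
  set k := n - 1 - d with hk
  have hnd : n - 1 = d + k := by omega
  rwa [hnd, coeff_X_pow_mul] at this

section Phi
variable (R : Type*) [CommRing R] (n : ℕ) (M : Type*) [AddCommGroup M]
  [Module (Rn R n) M] [Module R M] [IsScalarTower R (Rn R n) M]

def Phi : (M →ₗ[Rn R n] Rn R n) →ₗ[R] (M →ₗ[R] R) where
  toFun φ := (lam R n) ∘ₗ (φ.restrictScalars R)
  map_add' φ ψ := by ext m; simp
  map_smul' r φ := by ext m; simp

@[simp] lemma Phi_apply (φ : M →ₗ[Rn R n] Rn R n) (m : M) :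
    Phi R n M φ m = lam R n (φ m) := rfl

variable {R n M}

lemma Phi_injective (hn : 0 < n) : Function.Injective (Phi R n M) := by
  have key : ∀ φ : M →ₗ[Rn R n] Rn R n, Phi R n M φ = 0 → φ = 0 := by
    intro φ hφ
    ext m
    apply eq_zero_of_lam hn
    intro k
    have h1 : (tn R n)^k * φ m = φ ((tn R n)^k • m) := by
      rw [map_smul, smul_eq_mul]
    rw [h1]
    have := LinearMap.congr_fun hφ ((tn R n)^k • m)
    simpa using this
  intro φ ψ h
  have : φ - ψ = 0 := key _ (by rw [map_sub, h, sub_self])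
  rw [← sub_eq_zero]; exact this

lemma shift_sum_aux {A : Type*} [AddCommMonoid A] (n : ℕ) (hn : 0 < n) (a b : ℕ → A)
    (hab : ∀ k, k + 1 < n → a k = b (k+1)) (ha : a (n-1) = 0) (hb : b 0 = 0) :
    ∑ k ∈ Finset.range n, a k = ∑ k ∈ Finset.range n, b k := by
  obtain ⟨m, rfl⟩ : ∃ m, n = m + 1 := ⟨n - 1, by omega⟩
  rw [Finset.sum_range_succ, Finset.sum_range_succ']
  rw [show m + 1 - 1 = m from rfl] at ha
  rw [ha, hb, add_zero, add_zero]
  exact Finset.sum_congr rfl fun k hk =>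
    hab k (by have := Finset.mem_range.mp hk; omega)

lemma Phi_surjective (hn : 0 < n) : Function.Surjective (Phi R n M) := by
  intro f
  let φ₀ : M → Rn R n := fun m =>
    ∑ k ∈ Finset.range n, algebraMap R (Rn R n) (f ((tn R n)^k • m)) * (tn R n)^(n-1-k)
  have hadd : ∀ m m', φ₀ (m + m') = φ₀ m + φ₀ m' := by
    intro m m'
    simp [φ₀, smul_add, map_add, add_mul, Finset.sum_add_distrib]
  have hsmulR : ∀ (r : R) (m : M), φ₀ (r • m) = r • φ₀ m := by
    intro r m
    have h1 : φ₀ (r • m) = ∑ k ∈ Finset.range n,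
        r • (algebraMap R (Rn R n) (f ((tn R n)^k • m)) * (tn R n)^(n-1-k)) := by
      simp only [φ₀]
      refine Finset.sum_congr rfl fun k _ => ?_
      rw [smul_comm ((tn R n)^k) r m, map_smul, smul_eq_mul, map_mul,
        ← algebraMap_smul (Rn R n) r
          (algebraMap R (Rn R n) (f ((tn R n)^k • m)) * (tn R n)^(n-1-k)),
        smul_eq_mul, mul_assoc]
    rw [h1, ← Finset.smul_sum]
  have htn : ∀ m : M, φ₀ (tn R n • m) = tn R n * φ₀ m := by
    intro m
    have hL : φ₀ (tn R n • m)
        = ∑ k ∈ Finset.range n,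
            algebraMap R (Rn R n) (f ((tn R n)^(k+1) • m)) * (tn R n)^(n-1-k) := by
      simp only [φ₀]
      refine Finset.sum_congr rfl fun k _ => ?_
      rw [smul_smul, ← pow_succ]
    have hR : tn R n * φ₀ m
        = ∑ k ∈ Finset.range n,
            algebraMap R (Rn R n) (f ((tn R n)^k • m)) * (tn R n)^(n-k) := by
      simp only [φ₀]
      rw [Finset.mul_sum]
      refine Finset.sum_congr rfl fun k hk => ?_
      rw [Finset.mem_range] at hk
      rw [mul_left_comm, ← pow_succ']
      congr 2
      omega
    rw [hL, hR]
    refine shift_sum_aux n hn _ _ (fun k hk => ?_) ?_ ?_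
    · congr 2
      omega
    · have h2 : n - 1 + 1 = n := by omega
      rw [h2, tn_pow_self, zero_smul (Rn R n) m, map_zero, map_zero, zero_mul]
    · rw [Nat.sub_zero, tn_pow_self, mul_zero]
  have htpow : ∀ (k : ℕ) (m : M), φ₀ ((tn R n)^k • m) = (tn R n)^k * φ₀ m := by
    intro k
    induction k with
    | zero => intro m; simp
    | succ k ih =>
        intro m
        have h1 : (tn R n)^(k+1) • m = tn R n • ((tn R n)^k • m) := by
          rw [smul_smul, ← pow_succ']
        rw [h1, htn, ih, ← mul_assoc, ← pow_succ']
  have hA : ∀ (a : Rn R n) (m : M), φ₀ (a • m) = a * φ₀ m := by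
    intro a m
    obtain ⟨p, rfl⟩ := Ideal.Quotient.mk_surjective a
    induction p using Polynomial.induction_on' with
    | add p q hp hq => rw [map_add, add_smul, hadd, hp, hq, add_mul]
    | monomial i r =>
        have hmk : (Ideal.Quotient.mk (Ideal.span {(X : Polynomial R)^n}) (monomial i r) : Rn R n)
            = algebraMap R (Rn R n) r * (tn R n)^i := by
          rw [← Polynomial.C_mul_X_pow_eq_monomial, map_mul, algebraMap_Rn_eq]
          congr 1
        rw [hmk, mul_smul, algebraMap_smul, hsmulR, htpow,
          ← algebraMap_smul (Rn R n) r ((tn R n)^i * φ₀ m), smul_eq_mul, mul_assoc]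
  let φ : M →ₗ[Rn R n] Rn R n :=
    { toFun := φ₀
      map_add' := hadd
      map_smul' := fun a m => by simpa [smul_eq_mul] using hA a m }
  refine ⟨φ, ?_⟩
  ext m
  show lam R n (φ₀ m) = f m
  have h1 : lam R n (φ₀ m) = ∑ k ∈ Finset.range n,
      lam R n (algebraMap R (Rn R n) (f ((tn R n)^k • m)) * (tn R n)^(n-1-k)) := by
    simp only [φ₀, map_sum]
  rw [h1]
  have hterm : ∀ k ∈ Finset.range n,
      lam R n (algebraMap R (Rn R n) (f ((tn R n)^k • m)) * (tn R n)^(n-1-k))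
        = if k = 0 then f m else 0 := by
    intro k hk
    rw [Finset.mem_range] at hk
    rw [← Algebra.smul_def, map_smul, lam_tn_pow hn _ (by omega), smul_eq_mul]
    by_cases h0 : k = 0
    · subst h0; simp
    · have hne : ¬ (n - 1 - k = n - 1) := by omega
      simp [hne, h0]
  rw [Finset.sum_congr rfl hterm]
  simp [Finset.sum_ite_eq' (Finset.range n), hn]

end Phi



lemma torsion_coker_eval_of_domain {R : Type*} [CommRing R] [IsDomain R] [IsNoetherianRing R]
    (M : Type*) [AddCommGroup M] [Module R M] [Module.Finite R M]
    (ξ : Module.Dual R (Module.Dual R M)) :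
    ∃ r : R, r ≠ 0 ∧ ∃ m : M, r • ξ = Module.Dual.eval R M m := by
  classical
  haveI : Module.FinitePresentation R M := Module.finitePresentation_of_finite R M
  set S : Submonoid R := nonZeroDivisors R with hS
  let K := FractionRing R
  let f : M →ₗ[R] LocalizedModule S M := LocalizedModule.mkLinearMap S M
  let g : R →ₗ[R] K := Algebra.linearMap R K
  let map1 : Module.Dual R M →ₗ[R] (LocalizedModule S M →ₗ[R] K) :=
    IsLocalizedModule.map S f g
  haveI h1 : IsLocalizedModule S map1 :=
    Module.FinitePresentation.isLocalizedModule_map S f g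
  haveI : Module.Finite R (Module.Dual R M) := by
    obtain ⟨k, π, hπ⟩ := Module.Finite.exists_fin' R M
    exact Module.Finite.of_injective π.dualMap
      (LinearMap.dualMap_injective_of_surjective hπ)
  haveI : Module.FinitePresentation R (Module.Dual R M) :=
    Module.finitePresentation_of_finite _ _
  let map2 : Module.Dual R (Module.Dual R M) →ₗ[R] ((LocalizedModule S M →ₗ[R] K) →ₗ[R] K) :=
    IsLocalizedModule.map S map1 g
  haveI h2 : IsLocalizedModule S map2 :=
    Module.FinitePresentation.isLocalizedModule_map S map1 g
  have halg : ∀ (s : S) (x y : K), (s : R) • x = (s : R) • y → x = y := by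
    intro s x y h
    have hs : (algebraMap R K) (s : R) ≠ 0 :=
      IsFractionRing.to_map_ne_zero_of_mem_nonZeroDivisors s.2
    rw [Algebra.smul_def, Algebra.smul_def] at h
    exact mul_left_cancel₀ hs h
  haveI : Module.Finite K (LocalizedModule S M) := Module.Finite.of_isLocalizedModule S f
  -- find m' representing map2 ξ
  let e : (LocalizedModule S M →ₗ[R] K) ≃ₗ[K] (LocalizedModule S M →ₗ[K] K) :=
    LinearMap.extendScalarsOfIsLocalizationEquiv S K
  let ξk : (LocalizedModule S M →ₗ[R] K) →ₗ[K] K :=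
    LinearMap.extendScalarsOfIsLocalization S K (map2 ξ)
  let ξ'' : Module.Dual K (Module.Dual K (LocalizedModule S M)) :=
    ξk ∘ₗ (e.symm : (LocalizedModule S M →ₗ[K] K) →ₗ[K] (LocalizedModule S M →ₗ[R] K))
  obtain ⟨m', hm'⟩ := (Module.evalEquiv K (LocalizedModule S M)).surjective ξ''
  have hm'' : ∀ ψ : LocalizedModule S M →ₗ[R] K, map2 ξ ψ = ψ m' := by
    intro ψ
    have h3 : ξ'' (e ψ) = (e ψ) m' := by
      rw [← hm', Module.evalEquiv_apply, Module.Dual.eval_apply]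
    have h4 : ξ'' (e ψ) = map2 ξ ψ := by
      show ξk (e.symm (e ψ)) = map2 ξ ψ
      rw [e.symm_apply_apply]
      rfl
    rw [← h4, h3]
    rfl
  obtain ⟨⟨m, s⟩, hms⟩ := IsLocalizedModule.surj S f m'
  have key : map2 ((s : R) • ξ) = map2 (Module.Dual.eval R M m) := by
    ext ψ
    have lhs : map2 ((s : R) • ξ) ψ = ψ (f m) := by
      rw [map_smul, LinearMap.smul_apply, hm'' ψ, ← map_smul, ← Submonoid.smul_def, hms]
    have rhs : map2 (Module.Dual.eval R M m) ψ = ψ (f m) := by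
      obtain ⟨⟨φ, s'⟩, hφ⟩ := IsLocalizedModule.surj S map1 ψ
      apply halg s'
      have e1 : (s' : R) • (map2 (Module.Dual.eval R M m) ψ)
          = map2 (Module.Dual.eval R M m) (map1 φ) := by
        rw [← hφ, Submonoid.smul_def, map_smul]
      have e2 : (s' : R) • ψ (f m) = (map1 φ) (f m) := by
        rw [← hφ]
        rfl
      rw [e1, e2, IsLocalizedModule.map_apply, IsLocalizedModule.map_apply]
      rfl
    rw [lhs, rhs]
  obtain ⟨c, hc⟩ := IsLocalizedModule.exists_of_eq (S := S) (f := map2) key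
  refine ⟨(c : R) * (s : R), ?_, (c : R) • m, ?_⟩
  · exact mul_ne_zero (nonZeroDivisors.coe_ne_zero c) (nonZeroDivisors.coe_ne_zero s)
  · rw [mul_smul]
    rw [Submonoid.smul_def, Submonoid.smul_def] at hc
    rw [hc, map_smul]


set_option synthInstance.maxHeartbeats 1000000
set_option maxHeartbeats 1000000

lemma exists_smul_eval {R : Type*} [CommRing R] [IsDomain R] [IsNoetherianRing R] {n : ℕ}
    (hn : 0 < n) (M : Type*) [AddCommGroup M] [Module (Rn R n) M] [Module R M]
    [IsScalarTower R (Rn R n) M] [Module.Finite R M]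
    (ξ : Module.Dual (Rn R n) (Module.Dual (Rn R n) M)) :
    ∃ r : R, r ≠ 0 ∧ ∃ m : M, algebraMap R (Rn R n) r • ξ = Module.Dual.eval (Rn R n) M m := by
  let e₁ : (M →ₗ[Rn R n] Rn R n) ≃ₗ[R] (M →ₗ[R] R) :=
    LinearEquiv.ofBijective (Phi R n M) ⟨Phi_injective hn, Phi_surjective hn⟩
  let e₂ : ((M →ₗ[Rn R n] Rn R n) →ₗ[Rn R n] Rn R n) ≃ₗ[R] ((M →ₗ[Rn R n] Rn R n) →ₗ[R] R) :=
    LinearEquiv.ofBijective (Phi R n (M →ₗ[Rn R n] Rn R n))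
      ⟨Phi_injective hn, Phi_surjective hn⟩
  have hsq : ∀ m : M, e₁.symm.dualMap (e₂ (Module.Dual.eval (Rn R n) M m))
      = Module.Dual.eval R M m := by
    intro m
    ext φ
    rw [LinearEquiv.dualMap_apply]
    show Phi R n (M →ₗ[Rn R n] Rn R n) (Module.Dual.eval (Rn R n) M m) (e₁.symm φ) = φ m
    rw [Phi_apply, Module.Dual.eval_apply]
    have h1 : lam R n ((e₁.symm φ) m) = Phi R n M (e₁.symm φ) m := rfl
    have h2 : Phi R n M (e₁.symm φ) = e₁ (e₁.symm φ) := rfl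
    rw [h1, h2, e₁.apply_symm_apply]
  obtain ⟨r, hr, m, hm⟩ := torsion_coker_eval_of_domain M (e₁.symm.dualMap (e₂ ξ))
  refine ⟨r, hr, m, ?_⟩
  rw [algebraMap_smul (Rn R n) r ξ]
  apply e₂.injective
  apply e₁.symm.dualMap.injective
  rw [map_smul, map_smul, hm, hsq]

end AuxFrobenius

set_option synthInstance.maxHeartbeats 1000000
set_option maxHeartbeats 1000000

/-- The cokernel of the canonical map `t_M : M → M^{∨∨}` of a finitely generated
`R[n]`-module `M` into its double dual is a torsion module: every element is
annihilated by a non-zero-divisor of `R[n]`. -/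
theorem coker_eval_isTorsion
    {R : Type*} [CommRing R] [IsDomain R] [IsNoetherianRing R]
    (n : ℕ) (hn : 0 < n)
    (M : Type*) [AddCommGroup M] [Module (Rn R n) M] [Module.Finite (Rn R n) M] :
    Module.IsTorsion (Rn R n)
      (Module.Dual (Rn R n) (Module.Dual (Rn R n) M) ⧸
        LinearMap.range (Module.Dual.eval (Rn R n) M)) := by
  classical
  intro x
  obtain ⟨ξ, rfl⟩ := Submodule.Quotient.mk_surjective _ x
  letI : Module R M := Module.compHom M (algebraMap R (Rn R n))
  haveI : IsScalarTower R (Rn R n) M := ⟨fun r a m => by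
    show (r • a) • m = algebraMap R (Rn R n) r • (a • m)
    rw [← algebraMap_smul (Rn R n) r a, smul_eq_mul, mul_smul]⟩
  haveI : Module.Finite R (Rn R n) :=
    Module.Finite.of_basis (AdjoinRoot.powerBasis' (monic_X_pow n (R := R))).basis
  haveI : Module.Finite R M := Module.Finite.trans (Rn R n) M
  obtain ⟨r, hr, m, hm⟩ := exists_smul_eval hn M ξ
  refine ⟨⟨algebraMap R (Rn R n) r, algebraMap_Rn_mem_nonZeroDivisors hr⟩, ?_⟩
  rw [Submonoid.mk_smul, ← Submodule.Quotient.mk_smul, hm, Submodule.Quotient.mk_eq_zero]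
  exact LinearMap.mem_range_self _ m
end
end

section
/- Let R be a commutative Noetherian integral domain, n a positive integer, and M a finitely generated R[n]-module. Then M is balanced if and only if M_i = M^{(n-i)} for every 1 ≤ i ≤ n, i.e. t^i M = {m ∈ M : t^{n-i} m = 0} for every 1 ≤ i ≤ n. -/
open Polynomial

noncomputable section

section Aux

variable (R : Type*) [CommRing R] (n : ℕ)

lemma tn_pow_eq_zero : tn R n ^ n = 0 := by
  rw [tn, ← map_pow, Ideal.Quotient.eq_zero_iff_mem]
  exact Ideal.subset_span rfl

variable (M : Type*) [AddCommGroup M] [Module (Rn R n) M]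

lemma mem_kt_iff {i : ℕ} {x : M} : x ∈ kt R n M i ↔ tn R n ^ i • x = 0 := Iff.rfl

lemma mem_tMi_iff {i : ℕ} {x : M} : x ∈ tMi R n M i ↔ ∃ m : M, tn R n ^ i • m = x :=
  Iff.rfl

lemma kt_zero_eq : kt R n M 0 = ⊥ := by
  ext x
  simp [mem_kt_iff]

lemma tMi_mono {i j : ℕ} (h : i ≤ j) : tMi R n M j ≤ tMi R n M i := by
  rintro x ⟨m, rfl⟩
  refine ⟨tn R n ^ (j - i) • m, ?_⟩
  simp only [LinearMap.lsmul_apply, smul_smul, ← pow_add]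
  rw [Nat.add_sub_cancel' h]

lemma tMi_le_kt {i : ℕ} (h : i ≤ n) : tMi R n M i ≤ kt R n M (n - i) := by
  rintro x ⟨m, rfl⟩
  rw [mem_kt_iff]
  simp only [LinearMap.lsmul_apply, smul_smul, ← pow_add]
  rw [Nat.sub_add_cancel h, tn_pow_eq_zero]
  exact zero_smul (Rn R n) m

lemma lamComp_mk (k : ℕ) (x : M) (hx : x ∈ kt R n M (k + 1))
    (hx' : tn R n ^ k • x ∈ kt R n M 1) :
    lamComp R n M k (Submodule.Quotient.mk ⟨x, hx⟩) =
      Submodule.Quotient.mk ⟨tn R n ^ k • x, hx'⟩ := by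
  induction k generalizing x with
  | zero =>
    simp only [lamComp, LinearMap.id_coe, id_eq]
    congr 1
    exact Subtype.ext (by simp)
  | succ k ih =>
    have htx : tn R n • x ∈ kt R n M (k + 1) := kt_pred_mem R n M hx
    have htx' : tn R n ^ k • (tn R n • x) ∈ kt R n M 1 := by
      rw [mem_kt_iff] at hx' ⊢
      simp only [smul_smul] at hx' ⊢
      rwa [show tn R n ^ 1 * (tn R n ^ k * tn R n) = tn R n ^ 1 * tn R n ^ (k + 1) by ring]
    simp only [lamComp, LinearMap.comp_apply]
    have hmap : lamMap R n M k (Submodule.Quotient.mk ⟨x, hx⟩) =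
        Submodule.Quotient.mk ⟨tn R n • x, htx⟩ := by
      rw [lamMap, Submodule.mapQ_apply]
      congr 1
    rw [hmap, ih (tn R n • x) htx htx']
    refine congrArg _ (Subtype.ext ?_)
    show tn R n ^ k • tn R n • x = tn R n ^ (k + 1) • x
    rw [smul_smul, ← pow_succ]

lemma surj_iff (hn : 0 < n) :
    Function.Surjective (lamComp R n M (n - 1)) ↔ kt R n M 1 ≤ tMi R n M (n - 1) := by
  constructor
  · intro h y hy
    obtain ⟨q, hq⟩ := h (Submodule.Quotient.mk ⟨y, hy⟩)
    obtain ⟨⟨x, hx⟩, rfl⟩ := Submodule.Quotient.mk_surjective _ q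
    have hx' : tn R n ^ (n - 1) • x ∈ kt R n M 1 := by
      rw [mem_kt_iff] at hx ⊢
      rwa [pow_one, smul_smul, ← pow_succ']
    rw [lamComp_mk R n M (n - 1) x hx hx'] at hq
    rw [Submodule.Quotient.eq] at hq
    simp only [Submodule.mem_comap, Submodule.subtype_apply, AddSubgroupClass.coe_sub,
      kt_zero_eq, Submodule.mem_bot, sub_eq_zero] at hq
    exact ⟨x, hq⟩
  · intro h q
    obtain ⟨⟨y, hy⟩, rfl⟩ := Submodule.Quotient.mk_surjective _ q
    obtain ⟨x, hxy⟩ := h hy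
    have hx : x ∈ kt R n M (n - 1 + 1) := by
      rw [mem_kt_iff, Nat.sub_add_cancel hn, tn_pow_eq_zero]
      exact zero_smul (Rn R n) x
    have hx' : tn R n ^ (n - 1) • x ∈ kt R n M 1 := by
      rw [mem_kt_iff]
      rw [LinearMap.lsmul_apply] at hxy
      rw [hxy]
      exact hy
    refine ⟨Submodule.Quotient.mk ⟨x, hx⟩, ?_⟩
    rw [lamComp_mk R n M (n - 1) x hx hx']
    congr 1
    exact Subtype.ext hxy

lemma kt_le_tMi (h1 : kt R n M 1 ≤ tMi R n M (n - 1)) :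
    ∀ j k : ℕ, j + k = n → kt R n M j ≤ tMi R n M k := by
  intro j
  induction j with
  | zero =>
    intro k _
    rw [kt_zero_eq]
    exact bot_le
  | succ j ih =>
    intro k hjk x hx
    have htx : tn R n • x ∈ kt R n M j := kt_pred_mem R n M hx
    obtain ⟨m, hm⟩ := ih (k + 1) (by omega) htx
    rw [LinearMap.lsmul_apply] at hm
    have hker : x - tn R n ^ k • m ∈ kt R n M 1 := by
      rw [mem_kt_iff, pow_one, smul_sub, smul_smul, ← pow_succ', hm, sub_self]
    have hmem : x - tn R n ^ k • m ∈ tMi R n M k :=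
      tMi_mono R n M (by omega : k ≤ n - 1) (h1 hker)
    obtain ⟨m', hm'⟩ := hmem
    rw [LinearMap.lsmul_apply] at hm'
    refine ⟨m' + m, ?_⟩
    rw [LinearMap.lsmul_apply, smul_add, hm', sub_add_cancel]

end Aux

/-- A finitely generated `R[n]`-module `M` is balanced (i.e. the composition
`𝛌(M) = λ_1 ∘ ... ∘ λ_{n-1} : G^{(n)}(M) → G^{(1)}(M)` is surjective) iff
`t^i M = {m ∈ M : t^{n-i} m = 0}` for every `1 ≤ i ≤ n`. -/
theorem balanced_iff_tMi_eq_kt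
    {R : Type*} [CommRing R] [IsDomain R] [IsNoetherianRing R]
    (n : ℕ) (hn : 0 < n)
    (M : Type*) [AddCommGroup M] [Module (Rn R n) M] [Module.Finite (Rn R n) M] :
    Function.Surjective (lamComp R n M (n - 1)) ↔
      ∀ i : ℕ, 1 ≤ i → i ≤ n → tMi R n M i = kt R n M (n - i) := by
  rw [surj_iff R n M hn]
  constructor
  · intro h1 i hi1 hin
    refine le_antisymm (tMi_le_kt R n M hin) ?_
    exact kt_le_tMi R n M h1 (n - i) i (by omega)
  · intro h
    rcases eq_or_lt_of_le (Nat.succ_le_of_lt hn) with h1 | h1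
    · intro x _
      rw [show n - 1 = 0 by omega]
      exact ⟨x, by simp⟩
    · have := h (n - 1) (by omega) (by omega)
      rw [show n - (n - 1) = 1 by omega] at this
      exact this.ge
end
end
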